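/- For every integer k ≥ 3, the presented group ⟨ℓ, x₁, …, x_k ∣ [x_i, x_j] = 1 for all 1 ≤ i, j ≤ k, ℓ⁻¹x_iℓ = x_{i+1} for 1 ≤ i ≤ k−1, ℓ⁻¹x_kℓ = x₁⟩ is isomorphic to the presented group K_k = ⟨ℓ, x ∣ [x, ℓ^k] = 1, [x, ℓ⁻ⁱxℓⁱ] = 1 for i = 1, …, k−1⟩. -/

import Mathlib

open scoped commutatorElement

/-- The relators of `⟨ℓ, x₁, …, x_k ∣ [xᵢ, x_j] = 1 (1 ≤ i, j ≤ k),
ℓ⁻¹xᵢℓ = x_{i+1} (1 ≤ i ≤ k-1), ℓ⁻¹x_kℓ = x₁⟩`, with `ℓ = none` and the `xᵢ`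
(0-indexed) the elements `some i`, `i : Fin k`. -/
def bigRels (k : ℕ) : Set (FreeGroup (Option (Fin k))) :=
  let l : FreeGroup (Option (Fin k)) := FreeGroup.of none
  let x : Fin k → FreeGroup (Option (Fin k)) := fun i => FreeGroup.of (some i)
  (Set.range fun p : Fin k × Fin k => ⁅x p.1, x p.2⁆) ∪
    (Set.range fun i : Fin k =>
      l⁻¹ * x i * l * (x ⟨((i : ℕ) + 1) % k, Nat.mod_lt _ i.pos⟩)⁻¹)

/-- The relators of `K_k = ⟨ℓ, x ∣ [x, ℓ^k] = 1, [x, ℓ⁻ⁱxℓⁱ] = 1 (i = 1, …, k-1)⟩`,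
with generators `ℓ = 0`, `x = 1`. -/
def KRels (k : ℕ) : Set (FreeGroup (Fin 2)) :=
  let l : FreeGroup (Fin 2) := FreeGroup.of 0
  let x : FreeGroup (Fin 2) := FreeGroup.of 1
  {⁅x, l ^ k⁆} ∪
    Set.range (fun i : Fin (k - 1) => ⁅x, (l ^ ((i : ℕ) + 1))⁻¹ * x * l ^ ((i : ℕ) + 1)⁆)

namespace Stmt15

lemma mk_rel_one {α : Type*} {rels : Set (FreeGroup α)} {r : FreeGroup α} (hr : r ∈ rels) :
    PresentedGroup.mk rels r = 1 :=
  (QuotientGroup.eq_one_iff r).mpr (Subgroup.subset_normalClosure hr)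

lemma commute_conj_inv {G : Type*} [Group G] {a b : G} (c : G) (h : Commute a b) :
    Commute (c⁻¹ * a * c) (c⁻¹ * b * c) := by
  rw [commute_iff_eq] at h ⊢
  calc (c⁻¹*a*c)*(c⁻¹*b*c) = c⁻¹*(a*b)*c := by group
    _ = c⁻¹*(b*a)*c := by rw [h]
    _ = (c⁻¹*b*c)*(c⁻¹*a*c) := by group

/-- generator ℓ of K_k -/
def L (k : ℕ) : PresentedGroup (KRels k) := .of 0
/-- generator x of K_k -/
def X (k : ℕ) : PresentedGroup (KRels k) := .of 1
/-- generator ℓ of the big group -/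
def el (k : ℕ) : PresentedGroup (bigRels k) := .of none
/-- generator xᵢ of the big group -/
def ex {k : ℕ} (i : Fin k) : PresentedGroup (bigRels k) := .of (some i)

lemma hK (k : ℕ) : Commute (X k) (L k ^ k) := by
  rw [← commutatorElement_eq_one_iff_commute]
  have hmem : ⁅(FreeGroup.of 1 : FreeGroup (Fin 2)), FreeGroup.of 0 ^ k⁆ ∈ KRels k :=
    Set.mem_union_left _ rfl
  have := mk_rel_one hmem
  simpa [X, L, PresentedGroup.of, map_commutatorElement] using this

lemma hI (k : ℕ) (j : ℕ) (hj : j < k - 1) :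
    Commute (X k) ((L k ^ (j + 1))⁻¹ * X k * L k ^ (j + 1)) := by
  rw [← commutatorElement_eq_one_iff_commute]
  have hmem : ⁅(FreeGroup.of 1 : FreeGroup (Fin 2)),
      (FreeGroup.of 0 ^ (j + 1))⁻¹ * FreeGroup.of 1 * FreeGroup.of 0 ^ (j + 1)⁆ ∈ KRels k :=
    Set.mem_union_right _ ⟨⟨j, hj⟩, rfl⟩
  have := mk_rel_one hmem
  simpa [X, L, PresentedGroup.of, map_commutatorElement] using this

lemma commAux (k : ℕ) (i m : ℕ) (hm : m ≤ k - 1) :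
    Commute ((L k ^ i)⁻¹ * X k * L k ^ i) ((L k ^ (i + m))⁻¹ * X k * L k ^ (i + m)) := by
  rcases Nat.eq_zero_or_pos m with rfl | hm0
  · simp only [Nat.add_zero]; exact Commute.refl _
  · have h := hI k (m - 1) (by omega)
    rw [show m - 1 + 1 = m from by omega] at h
    have h' := commute_conj_inv (L k ^ i) h
    have e2 : (L k ^ i)⁻¹ * ((L k ^ m)⁻¹ * X k * L k ^ m) * L k ^ i
        = (L k ^ (i + m))⁻¹ * X k * L k ^ (i + m) := by
      rw [pow_add]; group
    rwa [e2] at h'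

/-- the map defining φ : Big → K -/
def fphi (k : ℕ) : Option (Fin k) → PresentedGroup (KRels k)
  | none => L k
  | some i => (L k ^ (i : ℕ))⁻¹ * X k * L k ^ (i : ℕ)

lemma hphi (k : ℕ) (hk : 3 ≤ k) : ∀ r ∈ bigRels k, FreeGroup.lift (fphi k) r = 1 := by
  intro r hr
  simp only [bigRels, Set.mem_union, Set.mem_range] at hr
  obtain ⟨⟨i, j⟩, rfl⟩ | ⟨i, rfl⟩ := hr
  · simp only [map_commutatorElement, FreeGroup.lift_apply_of, fphi,
      commutatorElement_eq_one_iff_commute]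
    rcases le_total (i : ℕ) (j : ℕ) with h | h
    · have := commAux k i ((j : ℕ) - i) (by have := j.isLt; omega)
      rwa [Nat.add_sub_cancel' h] at this
    · have := commAux k j ((i : ℕ) - j) (by have := i.isLt; omega)
      rw [Nat.add_sub_cancel' h] at this
      exact this.symm
  · simp only [map_mul, map_inv, FreeGroup.lift_apply_of, fphi]
    by_cases h : (i : ℕ) + 1 < k
    · rw [show ((i : ℕ) + 1) % k = (i : ℕ) + 1 from Nat.mod_eq_of_lt h]
      group
    · have hik : (i : ℕ) + 1 = k := by have := i.isLt; omega
      rw [show ((i : ℕ) + 1) % k = 0 from by rw [hik, Nat.mod_self]]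
      have key : (L k ^ k)⁻¹ * X k * L k ^ k = X k :=
        calc (L k ^ k)⁻¹ * X k * L k ^ k = (L k ^ k)⁻¹ * (X k * L k ^ k) := by group
          _ = (L k ^ k)⁻¹ * (L k ^ k * X k) := by rw [(hK k).eq]
          _ = X k := by group
      have e : L k ^ k = L k ^ (i : ℕ) * L k := by
        rw [← pow_succ]; congr 1; omega
      rw [e] at key
      calc (L k)⁻¹ * ((L k ^ (i : ℕ))⁻¹ * X k * L k ^ (i : ℕ)) * L k
            * ((L k ^ (0 : ℕ))⁻¹ * X k * L k ^ (0 : ℕ))⁻¹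
          = ((L k ^ (i : ℕ) * L k)⁻¹ * X k * (L k ^ (i : ℕ) * L k)) * (X k)⁻¹ := by group
        _ = X k * (X k)⁻¹ := by rw [key]
        _ = 1 := by group

/-- the map defining ψ : K → Big -/
def fpsi (k : ℕ) (hk : 0 < k) : Fin 2 → PresentedGroup (bigRels k) :=
  ![el k, ex ⟨0, hk⟩]

lemma bComm {k : ℕ} (i j : Fin k) : Commute (ex i) (ex j) := by
  rw [← commutatorElement_eq_one_iff_commute]
  have hmem : ⁅(FreeGroup.of (some i) : FreeGroup (Option (Fin k))), FreeGroup.of (some j)⁆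
      ∈ bigRels k := Set.mem_union_left _ ⟨(i, j), rfl⟩
  have := mk_rel_one hmem
  simpa [ex, PresentedGroup.of, map_commutatorElement] using this

lemma bShift {k : ℕ} (i : Fin k) :
    (el k)⁻¹ * ex i * el k = ex ⟨((i : ℕ) + 1) % k, Nat.mod_lt _ i.pos⟩ := by
  have hmem : (FreeGroup.of none)⁻¹ * FreeGroup.of (some i) * FreeGroup.of none
      * (FreeGroup.of (some ⟨((i : ℕ) + 1) % k, Nat.mod_lt _ i.pos⟩))⁻¹ ∈ bigRels k :=
    Set.mem_union_right _ ⟨i, rfl⟩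
  have h := mk_rel_one hmem
  simp only [map_mul, map_inv] at h
  have h' : (el k)⁻¹ * ex i * el k * (ex ⟨((i : ℕ) + 1) % k, Nat.mod_lt _ i.pos⟩)⁻¹ = 1 := h
  rw [mul_inv_eq_one] at h'
  exact h'

lemma bPow {k : ℕ} (hk : 3 ≤ k) (n : ℕ) :
    (el k ^ n)⁻¹ * ex ⟨0, by omega⟩ * el k ^ n = ex ⟨n % k, Nat.mod_lt _ (by omega)⟩ := by
  induction n with
  | zero =>
    simp only [pow_zero, inv_one, one_mul, mul_one]
    exact congrArg ex (Fin.ext (Nat.zero_mod k).symm)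
  | succ n ih =>
    have hmod : (n % k + 1) % k = (n + 1) % k := by
      have h1 : (n + 1) % k = (n % k + 1 % k) % k := Nat.add_mod n 1 k
      rw [Nat.mod_eq_of_lt (show 1 < k by omega)] at h1
      exact h1.symm
    calc (el k ^ (n + 1))⁻¹ * ex ⟨0, by omega⟩ * el k ^ (n + 1)
        = (el k)⁻¹ * ((el k ^ n)⁻¹ * ex ⟨0, by omega⟩ * el k ^ n) * el k := by
          rw [pow_succ]; group
      _ = (el k)⁻¹ * ex ⟨n % k, Nat.mod_lt _ (by omega)⟩ * el k := by rw [ih]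
      _ = ex ⟨(n % k + 1) % k, Nat.mod_lt _ (by omega)⟩ := bShift _
      _ = ex ⟨(n + 1) % k, Nat.mod_lt _ (by omega)⟩ := by
          congr 1
          exact Fin.ext hmod

lemma hpsi (k : ℕ) (hk : 3 ≤ k) :
    ∀ r ∈ KRels k, FreeGroup.lift (fpsi k (by omega)) r = 1 := by
  intro r hr
  simp only [KRels, Set.mem_union, Set.mem_singleton_iff, Set.mem_range] at hr
  obtain rfl | ⟨i, rfl⟩ := hr
  · simp only [map_commutatorElement, map_pow, FreeGroup.lift_apply_of, fpsi,
      Matrix.cons_val_zero, Matrix.cons_val_one, Matrix.head_cons,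
      commutatorElement_eq_one_iff_commute]
    rw [commute_iff_eq]
    have h := bPow (k := k) hk k
    have h0 : ex (k := k) ⟨k % k, Nat.mod_lt _ (by omega)⟩ = ex ⟨0, by omega⟩ := by
      congr 1; exact Fin.ext (Nat.mod_self k)
    rw [h0] at h
    calc ex ⟨0, by omega⟩ * el k ^ k
        = el k ^ k * ((el k ^ k)⁻¹ * ex ⟨0, by omega⟩ * el k ^ k) := by group
      _ = el k ^ k * ex ⟨0, by omega⟩ := by rw [h]
  · simp only [map_commutatorElement, map_mul, map_inv, map_pow, FreeGroup.lift_apply_of, fpsi,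
      Matrix.cons_val_zero, Matrix.cons_val_one, Matrix.head_cons,
      commutatorElement_eq_one_iff_commute]
    have h := bPow (k := k) hk ((i : ℕ) + 1)
    have hlt : (i : ℕ) + 1 < k := by have := i.isLt; omega
    have h0 : ex (k := k) ⟨((i : ℕ) + 1) % k, Nat.mod_lt _ (by omega)⟩
        = ex ⟨(i : ℕ) + 1, hlt⟩ := by
      congr 1; exact Fin.ext (Nat.mod_eq_of_lt hlt)
    rw [h0] at h
    rw [h]
    exact bComm _ _

end Stmt15

open Stmt15 in
/-- For `k ≥ 3`, `⟨ℓ, x₁, …, x_k ∣ [xᵢ, x_j] = 1,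
ℓ⁻¹xᵢℓ = x_{i+1 mod k}⟩` is isomorphic to
`K_k = ⟨ℓ, x ∣ [x, ℓ^k] = 1, [x, ℓ⁻ⁱxℓⁱ] = 1 (i = 1, …, k-1)⟩`. -/
theorem big_presentation_iso_Kk (k : ℕ) (hk : 3 ≤ k) :
    Nonempty (PresentedGroup (bigRels k) ≃* PresentedGroup (KRels k)) := by
  set phi : PresentedGroup (bigRels k) →* PresentedGroup (KRels k) :=
    PresentedGroup.toGroup (hphi k hk) with hphidef
  set psi : PresentedGroup (KRels k) →* PresentedGroup (bigRels k) :=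
    PresentedGroup.toGroup (hpsi k hk) with hpsidef
  refine ⟨MonoidHom.toMulEquiv phi psi ?_ ?_⟩
  · apply PresentedGroup.ext
    intro o
    match o with
    | none =>
      show psi (phi (el k)) = el k
      have h1 : phi (el k) = L k := PresentedGroup.toGroup.of _
      have h2 : psi (L k) = el k := PresentedGroup.toGroup.of _
      rw [h1, h2]
    | some i =>
      show psi (phi (ex i)) = ex i
      have h1 : phi (ex i) = (L k ^ (i : ℕ))⁻¹ * X k * L k ^ (i : ℕ) :=
        PresentedGroup.toGroup.of _
      have h2 : psi (L k) = el k := PresentedGroup.toGroup.of _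
      have h3 : psi (X k) = ex ⟨0, by omega⟩ := PresentedGroup.toGroup.of _
      rw [h1, map_mul, map_mul, map_inv, map_pow, h2, h3]
      rw [bPow hk (i : ℕ)]
      congr 1
      exact Fin.ext (Nat.mod_eq_of_lt i.isLt)
  · apply PresentedGroup.ext
    intro x
    fin_cases x
    · show phi (psi (L k)) = L k
      have h2 : psi (L k) = el k := PresentedGroup.toGroup.of _
      have h1 : phi (el k) = L k := PresentedGroup.toGroup.of _
      rw [h2, h1]
    · show phi (psi (X k)) = X k
      have h3 : psi (X k) = ex ⟨0, by omega⟩ := PresentedGroup.toGroup.of _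
      have h1 : phi (ex ⟨0, by omega⟩) = (L k ^ (0 : ℕ))⁻¹ * X k * L k ^ (0 : ℕ) :=
        PresentedGroup.toGroup.of _
      rw [h3, h1]
      group
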